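/- Let m ≥ 2 be odd, n ≥ 1, w the chain pomset weight on (ZMod m)^n, and C = {v : v_i = 0 for i ≤ n-k}. Then the number of codewords of C of weight exactly i is: 1 for i = 0; 0 for 1 ≤ i ≤ (n-k)⌊m/2⌋; and for i = t⌊m/2⌋ + j with t ≥ n-k and 1 ≤ j ≤ ⌊m/2⌋, it equals ((2j+1) - (2j-1))·m^{t-(n-k)} = 2·m^{t-(n-k)} when j < ⌊m/2⌋, and (m - (2⌊m/2⌋-1))·m^{t-(n-k)} = 2·m^{t-(n-k)} when j = ⌊m/2⌋ (since m odd gives m - (m-2) = 2). -/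

import Mathlib

/-- The Lee weight on `ZMod m`. -/
def leeWeight (m : ℕ) (x : ZMod m) : ℕ := min x.val (m - x.val)

/-- The chain (NRT-type) pomset weight on `(ZMod m)^n`: the Lee weight of the
top nonzero coordinate plus `⌊m/2⌋` for each coordinate below it. -/
noncomputable def chainWeight (m n : ℕ) (v : Fin n → ZMod m) : ℕ :=
  if h : v = 0 then 0
  else
    let t : Fin n := (Finset.univ.filter fun i => v i ≠ 0).max' (by
      rw [Finset.filter_nonempty_iff]
      obtain ⟨i, hi⟩ := Function.ne_iff.mp h
      exact ⟨i, Finset.mem_univ i, by simpa using hi⟩)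
    leeWeight m (v t) + t.val * (m / 2)

lemma leeWeight_eq_zero_iff {m : ℕ} (hm : 2 ≤ m) (x : ZMod m) :
    leeWeight m x = 0 ↔ x = 0 := by
  haveI : NeZero m := ⟨by omega⟩
  have hlt : x.val < m := ZMod.val_lt x
  unfold leeWeight
  constructor
  · intro h
    have hv : x.val = 0 := by omega
    exact (ZMod.val_eq_zero x).mp hv
  · rintro rfl
    simp [ZMod.val_zero]

lemma leeWeight_le {m : ℕ} (hm : 2 ≤ m) (x : ZMod m) : leeWeight m x ≤ m / 2 := by
  haveI : NeZero m := ⟨by omega⟩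
  have hlt : x.val < m := ZMod.val_lt x
  unfold leeWeight
  omega

lemma chainWeight_eq_of {m n : ℕ} {v : Fin n → ZMod m} (t : Fin n)
    (hvt : v t ≠ 0) (htop : ∀ i, t < i → v i = 0) :
    chainWeight m n v = leeWeight m (v t) + t.val * (m / 2) := by
  have hv : v ≠ 0 := fun h => hvt (by rw [h]; rfl)
  have hne : (Finset.univ.filter fun i => v i ≠ 0).Nonempty :=
    ⟨t, by simp [hvt]⟩
  have hmax : (Finset.univ.filter fun i => v i ≠ 0).max' hne = t := by
    apply le_antisymm
    · apply Finset.max'_le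
      intro i hi
      simp only [Finset.mem_filter] at hi
      by_contra hlt
      exact hi.2 (htop i (lt_of_not_ge hlt))
    · exact Finset.le_max' _ _ (by simp [hvt])
  rw [chainWeight, dif_neg hv]
  exact congrArg (fun s : Fin n => leeWeight m (v s) + s.val * (m / 2)) hmax

lemma chainWeight_spec {m n : ℕ} {v : Fin n → ZMod m} (hv : v ≠ 0) :
    ∃ t : Fin n, v t ≠ 0 ∧ (∀ i, t < i → v i = 0) ∧
      chainWeight m n v = leeWeight m (v t) + t.val * (m / 2) := by
  have hne : (Finset.univ.filter fun i => v i ≠ 0).Nonempty := by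
    rw [Finset.filter_nonempty_iff]
    obtain ⟨i, hi⟩ := Function.ne_iff.mp hv
    exact ⟨i, Finset.mem_univ i, by simpa using hi⟩
  set t := (Finset.univ.filter fun i => v i ≠ 0).max' hne with ht
  have hmem := Finset.max'_mem _ hne
  rw [Finset.mem_filter] at hmem
  have hvt : v t ≠ 0 := hmem.2
  have htop : ∀ i, t < i → v i = 0 := by
    intro i hi
    by_contra h
    exact absurd (Finset.le_max' _ i (by simp [h])) (not_le.mpr hi)
  exact ⟨t, hvt, htop, chainWeight_eq_of t hvt htop⟩

lemma unique_decomp {q a b ja jb : ℕ} (h1 : 1 ≤ ja) (h2 : ja ≤ q) (h3 : 1 ≤ jb)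
    (h4 : jb ≤ q) (h : ja + a * q = jb + b * q) : a = b ∧ ja = jb := by
  rcases lt_trichotomy a b with h' | h' | h'
  · exfalso
    have hh : a * q + q ≤ b * q := by
      have h5 : a + 1 ≤ b := h'
      calc a * q + q = (a + 1) * q := by ring
        _ ≤ b * q := Nat.mul_le_mul_right q h5
    linarith
  · subst h'
    exact ⟨rfl, Nat.add_right_cancel h⟩
  · exfalso
    have hh : b * q + q ≤ a * q := by
      have h5 : b + 1 ≤ a := h'
      calc b * q + q = (b + 1) * q := by ring
        _ ≤ a * q := Nat.mul_le_mul_right q h5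
    linarith

lemma leeWeight_fiber {m : ℕ} (hm : 2 ≤ m) (hmodd : Odd m) {j : ℕ}
    (hj1 : 1 ≤ j) (hj2 : j ≤ m / 2) :
    {x : ZMod m | leeWeight m x = j} = {(j : ZMod m), ((m - j : ℕ) : ZMod m)} := by
  haveI : NeZero m := ⟨by omega⟩
  have hm2 : m % 2 = 1 := Nat.odd_iff.mp hmodd
  have hjm : j < m := by omega
  have hmj : m - j < m := by omega
  have hvj : ((j : ℕ) : ZMod m).val = j := ZMod.val_cast_of_lt hjm
  have hvmj : (((m - j : ℕ)) : ZMod m).val = m - j := ZMod.val_cast_of_lt hmj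
  ext x
  have hlt : x.val < m := ZMod.val_lt x
  simp only [Set.mem_setOf_eq, Set.mem_insert_iff, Set.mem_singleton_iff]
  constructor
  · intro h
    unfold leeWeight at h
    have hcase : x.val = j ∨ x.val = m - j := by omega
    rcases hcase with hc | hc
    · left
      apply ZMod.val_injective
      rw [hvj, hc]
    · right
      apply ZMod.val_injective
      rw [hvmj, hc]
  · rintro (rfl | rfl) <;> unfold leeWeight
    · rw [hvj]; omega
    · rw [hvmj]; omega

lemma leeWeight_fiber_card {m : ℕ} (hm : 2 ≤ m) (hmodd : Odd m) {j : ℕ}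
    (hj1 : 1 ≤ j) (hj2 : j ≤ m / 2) :
    Nat.card {x : ZMod m // leeWeight m x = j} = 2 := by
  haveI : NeZero m := ⟨by omega⟩
  show Nat.card ↑{x : ZMod m | leeWeight m x = j} = 2
  have hm2 : m % 2 = 1 := Nat.odd_iff.mp hmodd
  rw [leeWeight_fiber hm hmodd hj1 hj2, Nat.card_coe_set_eq]
  apply Set.ncard_pair
  intro h
  have := congrArg ZMod.val h
  rw [ZMod.val_cast_of_lt (by omega : j < m),
    ZMod.val_cast_of_lt (by omega : m - j < m)] at this
  omega

theorem chain_mds_weight_distribution (m n k : ℕ) (hm : 2 ≤ m) (hmodd : Odd m)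
    (hn : 1 ≤ n) (hk : k ≤ n) :
    letI C : Set (Fin n → ZMod m) := {v | ∀ i : Fin n, (i : ℕ) < n - k → v i = 0}
    (Nat.card {v : Fin n → ZMod m | v ∈ C ∧ chainWeight m n v = 0} = 1) ∧
      (∀ i : ℕ, 1 ≤ i → i ≤ (n - k) * (m / 2) →
        Nat.card {v : Fin n → ZMod m | v ∈ C ∧ chainWeight m n v = i} = 0) ∧
      (∀ t j : ℕ, n - k ≤ t → t < n → 1 ≤ j → j ≤ m / 2 →
        Nat.card {v : Fin n → ZMod m | v ∈ C ∧ chainWeight m n v = t * (m / 2) + j} =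
          2 * m ^ (t - (n - k))) := by
  haveI : NeZero m := ⟨by omega⟩
  have hm2 : m % 2 = 1 := Nat.odd_iff.mp hmodd
  set C : Set (Fin n → ZMod m) := {v | ∀ i : Fin n, (i : ℕ) < n - k → v i = 0} with hCdef
  refine ⟨?_, ?_, ?_⟩
  · -- weight 0
    have hset : {v : Fin n → ZMod m | v ∈ C ∧ chainWeight m n v = 0} = {0} := by
      ext v
      simp only [Set.mem_setOf_eq, Set.mem_singleton_iff]
      constructor
      · rintro ⟨-, h⟩
        by_contra hv
        obtain ⟨t, ht, -, heq⟩ := chainWeight_spec hv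
        rw [heq] at h
        have : leeWeight m (v t) ≠ 0 := fun hz => ht ((leeWeight_eq_zero_iff hm _).mp hz)
        omega
      · rintro rfl
        exact ⟨fun i _ => rfl, by rw [chainWeight, dif_pos rfl]⟩
    rw [hset, Nat.card_coe_set_eq, Set.ncard_singleton]
  · -- small weights
    intro i hi1 hi2
    have hset : {v : Fin n → ZMod m | v ∈ C ∧ chainWeight m n v = i} = ∅ := by
      ext v
      simp only [Set.mem_setOf_eq, Set.mem_empty_iff_false, iff_false, not_and]
      intro hC hw
      have hv : v ≠ 0 := by
        rintro rfl
        rw [chainWeight, dif_pos rfl] at hw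
        omega
      obtain ⟨t, ht, -, heq⟩ := chainWeight_spec hv
      have hlee : 1 ≤ leeWeight m (v t) := by
        have : leeWeight m (v t) ≠ 0 := fun hz => ht ((leeWeight_eq_zero_iff hm _).mp hz)
        omega
      have htk : n - k ≤ t.val := by
        by_contra h
        exact ht (hC t (by omega))
      have hmul : (n - k) * (m / 2) ≤ t.val * (m / 2) :=
        Nat.mul_le_mul_right _ htk
      rw [heq] at hw
      linarith
    rw [hset]
    simp
  · -- main count
    intro t j htk htn hj1 hj2
    set tF : Fin n := ⟨t, htn⟩ with htF
    -- characterization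
    have char : ∀ v : Fin n → ZMod m,
        (v ∈ C ∧ chainWeight m n v = t * (m / 2) + j) ↔
        ((∀ i : Fin n, (i : ℕ) < n - k → v i = 0) ∧ leeWeight m (v tF) = j ∧
          ∀ i : Fin n, t < (i : ℕ) → v i = 0) := by
      intro v
      constructor
      · rintro ⟨hC, hw⟩
        have hv : v ≠ 0 := by
          rintro rfl
          rw [chainWeight, dif_pos rfl] at hw
          omega
        obtain ⟨t', ht', htop', heq⟩ := chainWeight_spec hv
        have hlee1 : 1 ≤ leeWeight m (v t') := by
          have : leeWeight m (v t') ≠ 0 := fun hz => ht' ((leeWeight_eq_zero_iff hm _).mp hz)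
          omega
        have hlee2 : leeWeight m (v t') ≤ m / 2 := leeWeight_le hm _
        rw [heq] at hw
        have hq : leeWeight m (v t') + t'.val * (m / 2) = j + t * (m / 2) := by omega
        obtain ⟨he1, he2⟩ := unique_decomp hlee1 hlee2 hj1 hj2 hq
        have ht'F : t' = tF := Fin.ext he1
        rw [ht'F] at ht' htop' he2
        exact ⟨hC, he2, fun i hi => htop' i (by simpa [htF, Fin.lt_iff_val_lt_val] using hi)⟩
      · rintro ⟨hC, hlee, htop⟩
        have hvt : v tF ≠ 0 := by
          intro hz
          rw [hz, (leeWeight_eq_zero_iff hm (0 : ZMod m)).mpr rfl] at hlee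
          omega
        have heq := chainWeight_eq_of tF hvt (fun i hi => htop i (by simpa [htF, Fin.lt_iff_val_lt_val] using hi))
        rw [heq, hlee]
        exact ⟨hC, by simp [htF]; ring⟩
    -- the equivalence
    have hcast : ∀ i : ℕ, i ∈ Finset.Ico (n - k) t → i < n := fun i hi => by
      have := Finset.mem_Ico.mp hi; omega
    let e : {v : Fin n → ZMod m // v ∈ C ∧ chainWeight m n v = t * (m / 2) + j} ≃
        {x : ZMod m // leeWeight m x = j} ×
          ({i : ℕ // i ∈ Finset.Ico (n - k) t} → ZMod m) :=
      { toFun := fun v =>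
          ⟨⟨v.1 tF, ((char v.1).mp v.2).2.1⟩,
            fun i => v.1 ⟨i.1, hcast i.1 i.2⟩⟩
        invFun := fun p =>
          ⟨fun i => if h : (i : ℕ) = t then p.1.1
            else if h2 : n - k ≤ (i : ℕ) ∧ (i : ℕ) < t then
              p.2 ⟨(i : ℕ), Finset.mem_Ico.mpr h2⟩ else 0, by
            apply (char _).mpr
            refine ⟨?_, ?_, ?_⟩
            · intro i hi
              rw [dif_neg (by omega), dif_neg (by omega)]
            · rw [dif_pos rfl]
              exact p.1.2
            · intro i hi
              rw [dif_neg (by omega), dif_neg (by omega)]⟩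
        left_inv := by
          rintro ⟨v, hv⟩
          obtain ⟨hC, hlee, htop⟩ := (char v).mp hv
          apply Subtype.ext
          funext i
          dsimp only
          by_cases h : (i : ℕ) = t
          · rw [dif_pos h]
            have : i = tF := Fin.ext h
            rw [this]
          · rw [dif_neg h]
            by_cases h2 : n - k ≤ (i : ℕ) ∧ (i : ℕ) < t
            · rw [dif_pos h2]
            · rw [dif_neg h2]
              rcases Nat.lt_or_ge (i : ℕ) (n - k) with hc | hc
              · exact (hC i hc).symm
              · exact (htop i (by omega)).symm
        right_inv := by
          rintro ⟨⟨x, hx⟩, f⟩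
          refine Prod.ext (Subtype.ext ?_) (funext fun i => ?_)
          · show (if h : (tF : ℕ) = t then x else _) = x
            rw [dif_pos rfl]
          · have hi := Finset.mem_Ico.mp i.2
            show (if h : ((⟨i.1, hcast i.1 i.2⟩ : Fin n) : ℕ) = t then x else _) = f i
            rw [dif_neg (by simp; omega)]
            rw [dif_pos (by simpa using hi)] }
    have h1 : Nat.card ↑{v : Fin n → ZMod m | v ∈ C ∧ chainWeight m n v = t * (m / 2) + j} =
        Nat.card ({x : ZMod m // leeWeight m x = j} ×
          ({i : ℕ // i ∈ Finset.Ico (n - k) t} → ZMod m)) := Nat.card_congr e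
    rw [h1, Nat.card_prod, leeWeight_fiber_card hm hmodd hj1 hj2,
      Nat.card_fun, Nat.card_zmod, Nat.card_eq_finsetCard, Nat.card_Ico]
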